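/- Let n ∈ ℕ, let a, b, c ∈ ℤ, and let g = gcd(a, gcd(b, c)). If R ∈ ℤ[x] has degree n, then gⁿ divides Res(R, ax² + bx + c). -/

import Mathlib

open Polynomial

/-- The Sylvester-style matrix of `f` (viewed as having degree `m`) and `g` (viewed as having
degree `n`): the first `n` columns are the shifted coefficient columns of `f` and the remaining
`m` columns are the shifted coefficient columns of `g`. -/
noncomputable def sylvester {R : Type*} [CommRing R] (f g : R[X]) (m n : ℕ) :
    Matrix (Fin (m + n)) (Fin (m + n)) R :=
  Matrix.of fun i j =>
    if (j : ℕ) < n then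
      (if (j : ℕ) ≤ (i : ℕ) ∧ (i : ℕ) - (j : ℕ) ≤ m then
        f.coeff (m - ((i : ℕ) - (j : ℕ))) else 0)
    else
      (if (j : ℕ) - n ≤ (i : ℕ) ∧ (i : ℕ) - ((j : ℕ) - n) ≤ n then
        g.coeff (n - ((i : ℕ) - ((j : ℕ) - n))) else 0)

/-- The resultant of `f` (of degree `m`) and `g` (of degree `n`), as the determinant of the
Sylvester matrix. -/
noncomputable def res {R : Type*} [CommRing R] (f g : R[X]) (m n : ℕ) : R :=
  (_root_.sylvester f g m n).det

/-- Scaling the second polynomial by a constant scales the last `n` columns. -/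
lemma sylvester_C_mul {S : Type*} [CommRing S] (f q : S[X]) (m n : ℕ) (g : S) :
    _root_.sylvester f (C g * q) m n =
      Matrix.of fun (i j : Fin (m + n)) =>
        (if (j : ℕ) < n then 1 else g) * _root_.sylvester f q m n i j := by
  ext i j
  simp only [_root_.sylvester, Matrix.of_apply, coeff_C_mul]
  split_ifs <;> ring

/-- If `g = gcd(a, gcd(b, c))` and `R ∈ ℤ[x]` has degree `n`, then `gⁿ` divides the resultant
of `R` and `ax² + bx + c`. -/
theorem gcd_pow_dvd_resultant (n : ℕ) (a b c : ℤ) (R : Polynomial ℤ) (hR : R.natDegree = n) :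
    (Int.gcd a (Int.gcd b c) : ℤ) ^ n ∣ res R (C a * X ^ 2 + C b * X + C c) n 2 := by
  set g : ℤ := (Int.gcd a (Int.gcd b c) : ℤ) with hg
  obtain ⟨a', ha⟩ : g ∣ a := Int.gcd_dvd_left _ _
  obtain ⟨b', hb⟩ : g ∣ b := dvd_trans (Int.gcd_dvd_right _ _) (Int.gcd_dvd_left _ _)
  obtain ⟨c', hc⟩ : g ∣ c := dvd_trans (Int.gcd_dvd_right _ _) (Int.gcd_dvd_right _ _)
  have hq : C a * X ^ 2 + C b * X + C c =
      C g * (C a' * X ^ 2 + C b' * X + C c') := by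
    rw [ha, hb, hc]; simp only [C_mul]; ring
  rw [res, hq, sylvester_C_mul,
    Matrix.det_mul_row (fun j : Fin (n + 2) => if (j : ℕ) < 2 then (1 : ℤ) else g)]
  have hprod : (∏ j : Fin (n + 2), (if (j : ℕ) < 2 then (1 : ℤ) else g)) = g ^ n := by
    rw [Fin.prod_univ_succ, Fin.prod_univ_succ]
    simp only [Fin.val_succ]
    have : ∀ x : Fin n, (if (x : ℕ) + 1 + 1 < 2 then (1 : ℤ) else g) = g := by
      intro x; simp
    simp [this, Finset.prod_const]
  rw [hprod]
  exact Dvd.intro _ rfl
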